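/- Let n, B be positive integers, Ψ ∈ ℝ^{n×B}, and let 0 < a ≤ b and c₀ > 0 be constants. Suppose: (i) ‖ΨᵀΨ/n − I_B‖_op ≤ 1/2; (ii) K₀ ∈ ℝ^{n×n} is symmetric with a·I_n ⪯ K₀ ⪯ b·I_n; and (iii) Σ ∈ ℝ^{B×B} is a positive definite diagonal matrix with ‖Σ^{-1}‖_op ≤ c₀ n. Set K = Ψ Σ Ψᵀ + K₀. Then there exist constants c > 0 and C > 0 depending only on a, b, c₀ such that c · B/n ≤ tr(Σ Ψᵀ K^{-2} Ψ Σ) ≤ C · B/n. -/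

import Mathlib

open Matrix

/-- The ℓ²→ℓ² operator (spectral) norm of a real matrix. -/
noncomputable def l2OpNorm {m n : ℕ} (A : Matrix (Fin m) (Fin n) ℝ) : ℝ :=
  ‖LinearMap.toContinuousLinearMap (Matrix.toEuclideanLin A)‖

namespace Statement12Aux

variable {k : ℕ}

lemma quad_le (A : Matrix (Fin k) (Fin k) ℝ) (x : Fin k → ℝ) :
    x ⬝ᵥ A *ᵥ x ≤ l2OpNorm A * (x ⬝ᵥ x) := by
  set f := LinearMap.toContinuousLinearMap (Matrix.toEuclideanLin A) with hf
  set y : EuclideanSpace ℝ (Fin k) := (WithLp.equiv 2 (Fin k → ℝ)).symm x with hy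
  have h1 : x ⬝ᵥ A *ᵥ x = inner ℝ y (f y) := by
    simp only [hf, hy, LinearMap.coe_toContinuousLinearMap']
    rw [Matrix.toEuclideanLin_apply]
    simp [PiLp.inner_apply, RCLike.inner_apply, dotProduct, mul_comm]
  have h2 : (x ⬝ᵥ x : ℝ) = ‖y‖ ^ 2 := by
    rw [← real_inner_self_eq_norm_sq]
    rw [real_inner_self_eq_norm_sq, EuclideanSpace.norm_sq_eq]
    simp [hy, dotProduct, sq]
  have h3 : inner ℝ y (f y) ≤ ‖y‖ * ‖f y‖ := real_inner_le_norm y (f y)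
  have h4 : ‖f y‖ ≤ ‖f‖ * ‖y‖ := f.le_opNorm y
  rw [h1, h2, l2OpNorm]
  calc inner ℝ y (f y) ≤ ‖y‖ * ‖f y‖ := h3
    _ ≤ ‖f‖ * ‖y‖ ^ 2 := by nlinarith [norm_nonneg y, norm_nonneg (f y)]

lemma l2OpNorm_neg (A : Matrix (Fin k) (Fin k) ℝ) : l2OpNorm (-A) = l2OpNorm A := by
  unfold l2OpNorm
  rw [map_neg, map_neg, norm_neg]

lemma psd_smul {A : Matrix (Fin k) (Fin k) ℝ} (hA : A.PosSemidef) {c : ℝ} (hc : 0 ≤ c) :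
    (c • A).PosSemidef := by
  refine Matrix.PosSemidef.of_dotProduct_mulVec_nonneg ?_ (fun x => ?_)
  · unfold Matrix.IsHermitian
    rw [Matrix.conjTranspose_smul, hA.1]; simp
  · rw [Matrix.smul_mulVec, dotProduct_smul]
    exact mul_nonneg hc (hA.dotProduct_mulVec_nonneg x)

lemma psd_sub_of_opNorm {A : Matrix (Fin k) (Fin k) ℝ} (hA : A.IsHermitian) {t : ℝ}
    (h : l2OpNorm A ≤ t) : (t • (1 : Matrix (Fin k) (Fin k) ℝ) - A).PosSemidef := by
  refine Matrix.PosSemidef.of_dotProduct_mulVec_nonneg ?_ (fun x => ?_)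
  · unfold Matrix.IsHermitian
    rw [Matrix.conjTranspose_sub, Matrix.conjTranspose_smul, hA]; simp
  · have h1 := quad_le A x
    have h2 : (0:ℝ) ≤ x ⬝ᵥ x := by
      simpa [dotProduct] using Finset.sum_nonneg (fun i _ => mul_self_nonneg (x i))
    have := mul_le_mul_of_nonneg_right h h2
    simp only [star_trivial, Matrix.sub_mulVec, Matrix.smul_mulVec, Matrix.one_mulVec,
      dotProduct_sub, dotProduct_smul, smul_eq_mul]
    nlinarith

lemma psd_add_of_opNorm {A : Matrix (Fin k) (Fin k) ℝ} (hA : A.IsHermitian) {t : ℝ}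
    (h : l2OpNorm A ≤ t) : (t • (1 : Matrix (Fin k) (Fin k) ℝ) + A).PosSemidef := by
  have := psd_sub_of_opNorm hA.neg (le_of_eq_of_le (l2OpNorm_neg A) h)
  rwa [sub_neg_eq_add] at this

lemma psd_trace_nonneg {A : Matrix (Fin k) (Fin k) ℝ} (hA : A.PosSemidef) : 0 ≤ A.trace := by
  rw [Matrix.trace]
  refine Finset.sum_nonneg fun i _ => ?_
  have := hA.dotProduct_mulVec_nonneg (Pi.single i 1)
  simpa [Matrix.mulVec_single, Matrix.diag, single_dotProduct] using this

open scoped MatrixOrder in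
lemma psd_trace_mul_nonneg {P Q : Matrix (Fin k) (Fin k) ℝ} (hP : P.PosSemidef)
    (hQ : Q.PosSemidef) : 0 ≤ (P * Q).trace := by
  have hR := (CFC.sqrt_nonneg Q).posSemidef
  have hRR : CFC.sqrt Q * CFC.sqrt Q = Q := CFC.sqrt_mul_sqrt_self Q hQ.nonneg
  have h1 : (P * Q).trace = (CFC.sqrt Q * P * CFC.sqrt Q).trace := by
    conv_lhs => rw [← hRR]
    rw [← Matrix.mul_assoc, Matrix.trace_mul_cycle]
  rw [h1]
  have := hP.conjTranspose_mul_mul_same (CFC.sqrt Q)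
  rw [hR.1] at this
  exact psd_trace_nonneg this

lemma posDef_of_psd_sub {A : Matrix (Fin k) (Fin k) ℝ} {t : ℝ} (ht : 0 < t)
    (h : (A - t • (1 : Matrix (Fin k) (Fin k) ℝ)).PosSemidef) : A.PosDef := by
  refine Matrix.PosDef.of_dotProduct_mulVec_pos ?_ ?_
  · have := h.1
    unfold Matrix.IsHermitian at this ⊢
    rw [Matrix.conjTranspose_sub, Matrix.conjTranspose_smul] at this
    simp only [conjTranspose_one, star_trivial] at this
    have h2 := congrArg (· + t • (1 : Matrix (Fin k) (Fin k) ℝ)) this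
    simpa using h2
  · intro x hx
    have h1 := h.dotProduct_mulVec_nonneg x
    have h2 : (0:ℝ) < x ⬝ᵥ x := by
      have hnn : (0:ℝ) ≤ x ⬝ᵥ x := by
        simpa [dotProduct] using Finset.sum_nonneg (fun i _ => mul_self_nonneg (x i))
      have hne : x ⬝ᵥ x ≠ 0 := fun h0 => hx (dotProduct_self_eq_zero.mp h0)
      exact lt_of_le_of_ne hnn (Ne.symm hne)
    simp only [star_trivial, Matrix.sub_mulVec, Matrix.smul_mulVec, Matrix.one_mulVec,
      dotProduct_sub, dotProduct_smul, smul_eq_mul] at h1 ⊢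
    nlinarith

open scoped MatrixOrder in
lemma inv_sandwich {G : Matrix (Fin k) (Fin k) ℝ} {μ ν : ℝ} (hμ : 0 < μ) (hν : 0 < ν)
    (hG : G.PosDef) (h1 : (G - μ • (1 : Matrix (Fin k) (Fin k) ℝ)).PosSemidef)
    (h2 : (ν • (1 : Matrix (Fin k) (Fin k) ℝ) - G).PosSemidef) :
    (G⁻¹ - ν⁻¹ • (1 : Matrix (Fin k) (Fin k) ℝ)).PosSemidef ∧
      (μ⁻¹ • (1 : Matrix (Fin k) (Fin k) ℝ) - G⁻¹).PosSemidef := by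
  set R := CFC.sqrt G with hRdef
  have hR : R.PosSemidef := (CFC.sqrt_nonneg G).posSemidef
  have hRR : R * R = G := CFC.sqrt_mul_sqrt_self G hG.posSemidef.nonneg
  have hdet : IsUnit R.det := by
    have hGdet : 0 < G.det := hG.det_pos
    rw [← hRR, Matrix.det_mul] at hGdet
    have : R.det ≠ 0 := fun h => by simp [h] at hGdet
    exact this.isUnit
  have hRinv : R * R⁻¹ = 1 := Matrix.mul_nonsing_inv R hdet
  have hRinv' : R⁻¹ * R = 1 := Matrix.nonsing_inv_mul R hdet
  have hGinv : G⁻¹ = R⁻¹ * R⁻¹ := by rw [← hRR, Matrix.mul_inv_rev]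
  have hone : R⁻¹ * G * R⁻¹ = 1 := by
    rw [← hRR, Matrix.mul_assoc, Matrix.mul_assoc, hRinv, Matrix.mul_one, hRinv']
  have hRih : R⁻¹.IsHermitian := hR.1.inv
  constructor
  · have key : G⁻¹ - ν⁻¹ • (1 : Matrix (Fin k) (Fin k) ℝ)
        = R⁻¹ᴴ * (ν⁻¹ • (ν • (1 : Matrix (Fin k) (Fin k) ℝ) - G)) * R⁻¹ := by
      rw [hRih, smul_sub, smul_smul, inv_mul_cancel₀ hν.ne', one_smul,
        Matrix.mul_sub, Matrix.sub_mul, Matrix.mul_one, mul_smul_comm, smul_mul_assoc,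
        hone, hGinv]
    rw [key]
    exact (psd_smul h2 (by positivity)).conjTranspose_mul_mul_same R⁻¹
  · have key : μ⁻¹ • (1 : Matrix (Fin k) (Fin k) ℝ) - G⁻¹
        = R⁻¹ᴴ * (μ⁻¹ • (G - μ • (1 : Matrix (Fin k) (Fin k) ℝ))) * R⁻¹ := by
      rw [hRih, smul_sub, smul_smul, inv_mul_cancel₀ hμ.ne', one_smul,
        Matrix.mul_sub, Matrix.sub_mul, Matrix.mul_one, mul_smul_comm, smul_mul_assoc,
        hone, hGinv]
    rw [key]
    exact (psd_smul h1 (by positivity)).conjTranspose_mul_mul_same R⁻¹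

end Statement12Aux

open Statement12Aux in
/-- There exist constants `c, C > 0` depending only on `a, b, c₀` such that the
low-frequency variance contribution `tr(Σ Ψᵀ K⁻² Ψ Σ)`, with `K = Ψ Σ Ψᵀ + K₀`,
is of exact order `B/n` whenever `‖ΨᵀΨ/n − I‖_op ≤ 1/2`, `a I ⪯ K₀ ⪯ b I` with `K₀`
symmetric, and `Σ` is positive definite diagonal with `‖Σ⁻¹‖_op ≤ c₀ n`. -/
theorem statement12 (a b c₀ : ℝ) (ha : 0 < a) (hab : a ≤ b) (hc₀ : 0 < c₀) :
    ∃ c : ℝ, 0 < c ∧ ∃ C : ℝ, 0 < C ∧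
      ∀ (n B : ℕ), 0 < n → 0 < B →
        ∀ (Ψ : Matrix (Fin n) (Fin B) ℝ) (K₀ : Matrix (Fin n) (Fin n) ℝ)
          (S : Matrix (Fin B) (Fin B) ℝ),
          l2OpNorm ((n : ℝ)⁻¹ • (Ψᵀ * Ψ) - 1) ≤ 1 / 2 →
          K₀.IsSymm →
          (K₀ - a • (1 : Matrix (Fin n) (Fin n) ℝ)).PosSemidef →
          (b • (1 : Matrix (Fin n) (Fin n) ℝ) - K₀).PosSemidef →
          S.IsDiag → S.PosDef → l2OpNorm S⁻¹ ≤ c₀ * n →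
          c * B / n ≤
              (S * Ψᵀ * ((Ψ * S * Ψᵀ + K₀)⁻¹ * (Ψ * S * Ψᵀ + K₀)⁻¹) * Ψ * S).trace ∧
            (S * Ψᵀ * ((Ψ * S * Ψᵀ + K₀)⁻¹ * (Ψ * S * Ψᵀ + K₀)⁻¹) * Ψ * S).trace ≤
              C * B / n := by
  have hb : 0 < b := lt_of_lt_of_le ha hab
  refine ⟨(2*b^2*(c₀+3/(2*a))^2)⁻¹, by positivity, 6*b^2/a^2, by positivity, ?_⟩
  intro n B hn hB Ψ K₀ S hΨ hK₀s hKa hKb hSd hS hSinv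
  have hnR : (0:ℝ) < n := by exact_mod_cast hn
  have hBR : (0:ℝ) < B := by exact_mod_cast hB
  -- transpose = conjTranspose over ℝ
  have htr : ∀ {p q : ℕ} (A : Matrix (Fin p) (Fin q) ℝ), Aᴴ = Aᵀ :=
    fun A => Matrix.conjTranspose_eq_transpose_of_trivial A
  -- Step A : bounds on P = ΨᵀΨ
  set P : Matrix (Fin B) (Fin B) ℝ := Ψᵀ * Ψ with hPdef
  have hPih : P.IsHermitian := by rw [hPdef, ← htr Ψ]; exact isHermitian_conjTranspose_mul_self Ψ
  set M : Matrix (Fin B) (Fin B) ℝ := (n:ℝ)⁻¹ • P - 1 with hMdef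
  have hMih : M.IsHermitian := by
    unfold Matrix.IsHermitian
    rw [hMdef, Matrix.conjTranspose_sub, Matrix.conjTranspose_smul, hPih, conjTranspose_one]
    simp
  have h1 := psd_sub_of_opNorm hMih hΨ
  have h2 := psd_add_of_opNorm hMih hΨ
  have enM : (n:ℝ) • M = P - (n:ℝ) • (1 : Matrix (Fin B) (Fin B) ℝ) := by
    rw [hMdef, smul_sub, smul_smul, mul_inv_cancel₀ hnR.ne', one_smul]
  have hPlo : (P - ((n:ℝ)/2) • (1 : Matrix (Fin B) (Fin B) ℝ)).PosSemidef := by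
    have t := psd_smul h2 hnR.le
    have e : (n:ℝ) • ((1/2 : ℝ) • (1 : Matrix (Fin B) (Fin B) ℝ) + M)
        = P - ((n:ℝ)/2) • (1 : Matrix (Fin B) (Fin B) ℝ) := by
      rw [smul_add, enM]; module
    rwa [e] at t
  have hPup : ((3*(n:ℝ)/2) • (1 : Matrix (Fin B) (Fin B) ℝ) - P).PosSemidef := by
    have t := psd_smul h1 hnR.le
    have e : (n:ℝ) • ((1/2 : ℝ) • (1 : Matrix (Fin B) (Fin B) ℝ) - M)
        = (3*(n:ℝ)/2) • (1 : Matrix (Fin B) (Fin B) ℝ) - P := by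
      rw [smul_sub, enM]; module
    rwa [e] at t
  -- Step B : K₀ and its inverse
  have hK0 : K₀.PosDef := posDef_of_psd_sub ha hKa
  have hK0d : IsUnit K₀.det := hK0.det_pos.ne'.isUnit
  have hK0inv : K₀⁻¹.PosDef := hK0.inv
  have hK0ih : K₀⁻¹.IsHermitian := hK0inv.1
  obtain ⟨hKinvLo, hKinvUp⟩ := inv_sandwich ha hb hK0 hKa hKb
  set W : Matrix (Fin n) (Fin n) ℝ := K₀⁻¹ * K₀⁻¹ with hWdef
  have hKK : K₀⁻¹ * K₀ = 1 := Matrix.nonsing_inv_mul K₀ hK0d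
  have hKK' : K₀ * K₀⁻¹ = 1 := Matrix.mul_nonsing_inv K₀ hK0d
  have conj1 : (K₀⁻¹ - a • W).PosSemidef := by
    have t := hKa.conjTranspose_mul_mul_same K₀⁻¹
    rw [hK0ih] at t
    have e : K₀⁻¹ * (K₀ - a • (1 : Matrix (Fin n) (Fin n) ℝ)) * K₀⁻¹ = K₀⁻¹ - a • W := by
      rw [Matrix.mul_sub, Matrix.sub_mul, hKK, Matrix.one_mul, Matrix.mul_smul,
        Matrix.mul_one, Matrix.smul_mul, hWdef]
    rwa [e] at t
  have conj2 : (b • W - K₀⁻¹).PosSemidef := by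
    have t := hKb.conjTranspose_mul_mul_same K₀⁻¹
    rw [hK0ih] at t
    have e : K₀⁻¹ * (b • (1 : Matrix (Fin n) (Fin n) ℝ) - K₀) * K₀⁻¹ = b • W - K₀⁻¹ := by
      rw [Matrix.mul_sub, Matrix.sub_mul, hKK, Matrix.one_mul, Matrix.mul_smul,
        Matrix.mul_one, Matrix.smul_mul, hWdef]
    rwa [e] at t
  have hWup : ((a⁻¹*a⁻¹) • (1 : Matrix (Fin n) (Fin n) ℝ) - W).PosSemidef := by
    have t := psd_smul (hKinvUp.add conj1) (le_of_lt (by positivity : (0:ℝ) < a⁻¹))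
    have e : a⁻¹ • (a⁻¹ • (1 : Matrix (Fin n) (Fin n) ℝ) - K₀⁻¹ + (K₀⁻¹ - a • W))
        = (a⁻¹*a⁻¹) • (1 : Matrix (Fin n) (Fin n) ℝ) - W := by
      rw [show a⁻¹ • (1 : Matrix (Fin n) (Fin n) ℝ) - K₀⁻¹ + (K₀⁻¹ - a • W)
          = a⁻¹ • (1 : Matrix (Fin n) (Fin n) ℝ) - a • W by module,
        smul_sub, smul_smul, smul_smul, inv_mul_cancel₀ ha.ne', one_smul]
    rwa [e] at t
  have hWlo : (W - (b⁻¹*b⁻¹) • (1 : Matrix (Fin n) (Fin n) ℝ)).PosSemidef := by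
    have t := psd_smul (conj2.add hKinvLo) (le_of_lt (by positivity : (0:ℝ) < b⁻¹))
    have e : b⁻¹ • (b • W - K₀⁻¹ + (K₀⁻¹ - b⁻¹ • (1 : Matrix (Fin n) (Fin n) ℝ)))
        = W - (b⁻¹*b⁻¹) • (1 : Matrix (Fin n) (Fin n) ℝ) := by
      rw [show b • W - K₀⁻¹ + (K₀⁻¹ - b⁻¹ • (1 : Matrix (Fin n) (Fin n) ℝ))
          = b • W - b⁻¹ • (1 : Matrix (Fin n) (Fin n) ℝ) by module,
        smul_sub, smul_smul, smul_smul, inv_mul_cancel₀ hb.ne', one_smul]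
    rwa [e] at t
  -- Step C : conjugation by Ψ
  have conjX : ∀ {A : Matrix (Fin n) (Fin n) ℝ}, A.PosSemidef → (Ψᵀ * A * Ψ).PosSemidef := by
    intro A hA
    have t := hA.conjTranspose_mul_mul_same Ψ
    rwa [htr Ψ] at t
  set X : Matrix (Fin B) (Fin B) ℝ := Ψᵀ * W * Ψ with hXdef
  set α : ℝ := (n:ℝ)/(2*b^2) with hαdef
  set β : ℝ := 3*(n:ℝ)/(2*a^2) with hβdef
  have hXlo : (X - α • (1 : Matrix (Fin B) (Fin B) ℝ)).PosSemidef := by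
    have t1 := conjX hWlo
    have e1 : Ψᵀ * (W - (b⁻¹*b⁻¹) • (1 : Matrix (Fin n) (Fin n) ℝ)) * Ψ
        = X - (b⁻¹*b⁻¹) • P := by
      rw [Matrix.mul_sub, Matrix.sub_mul, Matrix.mul_smul, Matrix.mul_one, Matrix.smul_mul]
    rw [e1] at t1
    have t2 := psd_smul hPlo (le_of_lt (by positivity : (0:ℝ) < b⁻¹*b⁻¹))
    have t := t1.add t2
    have e2 : X - (b⁻¹*b⁻¹) • P
        + (b⁻¹*b⁻¹) • (P - ((n:ℝ)/2) • (1 : Matrix (Fin B) (Fin B) ℝ))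
        = X - α • (1 : Matrix (Fin B) (Fin B) ℝ) := by
      rw [hαdef]; module
    rwa [e2] at t
  have hXup : (β • (1 : Matrix (Fin B) (Fin B) ℝ) - X).PosSemidef := by
    have t1 := conjX hWup
    have e1 : Ψᵀ * ((a⁻¹*a⁻¹) • (1 : Matrix (Fin n) (Fin n) ℝ) - W) * Ψ
        = (a⁻¹*a⁻¹) • P - X := by
      rw [Matrix.mul_sub, Matrix.sub_mul, Matrix.mul_smul, Matrix.mul_one, Matrix.smul_mul]
    rw [e1] at t1
    have t2 := psd_smul hPup (le_of_lt (by positivity : (0:ℝ) < a⁻¹*a⁻¹))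
    have t := t1.add t2
    have e2 : (a⁻¹*a⁻¹) • P - X
        + (a⁻¹*a⁻¹) • ((3*(n:ℝ)/2) • (1 : Matrix (Fin B) (Fin B) ℝ) - P)
        = β • (1 : Matrix (Fin B) (Fin B) ℝ) - X := by
      rw [hβdef]; module
    rwa [e2] at t
  -- Step D : bounds on L = Ψᵀ K₀⁻¹ Ψ
  set L : Matrix (Fin B) (Fin B) ℝ := Ψᵀ * K₀⁻¹ * Ψ with hLdef
  set μ : ℝ := (n:ℝ)/(2*b) with hμdef
  set ν : ℝ := (c₀ + 3/(2*a))*(n:ℝ) with hνdef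
  have hμpos : 0 < μ := by rw [hμdef]; positivity
  have hνpos : 0 < ν := by rw [hνdef]; positivity
  have hLlo : (L - μ • (1 : Matrix (Fin B) (Fin B) ℝ)).PosSemidef := by
    have t1 := conjX hKinvLo
    have e1 : Ψᵀ * (K₀⁻¹ - b⁻¹ • (1 : Matrix (Fin n) (Fin n) ℝ)) * Ψ = L - b⁻¹ • P := by
      rw [Matrix.mul_sub, Matrix.sub_mul, Matrix.mul_smul, Matrix.mul_one, Matrix.smul_mul]
    rw [e1] at t1
    have t2 := psd_smul hPlo (le_of_lt (by positivity : (0:ℝ) < b⁻¹))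
    have t := t1.add t2
    have e2 : L - b⁻¹ • P + b⁻¹ • (P - ((n:ℝ)/2) • (1 : Matrix (Fin B) (Fin B) ℝ))
        = L - μ • (1 : Matrix (Fin B) (Fin B) ℝ) := by
      rw [hμdef]; module
    rwa [e2] at t
  have hLup : ((3*(n:ℝ)/(2*a)) • (1 : Matrix (Fin B) (Fin B) ℝ) - L).PosSemidef := by
    have t1 := conjX hKinvUp
    have e1 : Ψᵀ * (a⁻¹ • (1 : Matrix (Fin n) (Fin n) ℝ) - K₀⁻¹) * Ψ = a⁻¹ • P - L := by
      rw [Matrix.mul_sub, Matrix.sub_mul, Matrix.mul_smul, Matrix.mul_one, Matrix.smul_mul]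
    rw [e1] at t1
    have t2 := psd_smul hPup (le_of_lt (by positivity : (0:ℝ) < a⁻¹))
    have t := t1.add t2
    have e2 : a⁻¹ • P - L + a⁻¹ • ((3*(n:ℝ)/2) • (1 : Matrix (Fin B) (Fin B) ℝ) - P)
        = (3*(n:ℝ)/(2*a)) • (1 : Matrix (Fin B) (Fin B) ℝ) - L := by
      module
    rwa [e2] at t
  have hLpsd : L.PosSemidef := conjX hK0inv.posSemidef
  -- Step E : S and G
  have hSdet : IsUnit S.det := hS.det_pos.ne'.isUnit
  have hSinvPD : S⁻¹.PosDef := hS.inv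
  have hSinvUp : ((c₀*(n:ℝ)) • (1 : Matrix (Fin B) (Fin B) ℝ) - S⁻¹).PosSemidef :=
    psd_sub_of_opNorm hSinvPD.1 hSinv
  set G : Matrix (Fin B) (Fin B) ℝ := S⁻¹ + L with hGdef
  have hGpd : G.PosDef := hSinvPD.add_posSemidef hLpsd
  have hGlo : (G - μ • (1 : Matrix (Fin B) (Fin B) ℝ)).PosSemidef := by
    have t := hSinvPD.posSemidef.add hLlo
    have e : S⁻¹ + (L - μ • (1 : Matrix (Fin B) (Fin B) ℝ))
        = G - μ • (1 : Matrix (Fin B) (Fin B) ℝ) := by rw [hGdef]; module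
    rwa [e] at t
  have hGup : (ν • (1 : Matrix (Fin B) (Fin B) ℝ) - G).PosSemidef := by
    have t := hSinvUp.add hLup
    have e : (c₀*(n:ℝ)) • (1 : Matrix (Fin B) (Fin B) ℝ) - S⁻¹
        + ((3*(n:ℝ)/(2*a)) • (1 : Matrix (Fin B) (Fin B) ℝ) - L)
        = ν • (1 : Matrix (Fin B) (Fin B) ℝ) - G := by rw [hGdef, hνdef]; module
    rwa [e] at t
  obtain ⟨hHlo, hHup⟩ := inv_sandwich hμpos hνpos hGpd hGlo hGup
  have hGdet : IsUnit G.det := hGpd.det_pos.ne'.isUnit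
  have hGG1 : G⁻¹ * G = 1 := Matrix.nonsing_inv_mul G hGdet
  have hGG2 : G * G⁻¹ = 1 := Matrix.mul_nonsing_inv G hGdet
  have hSS1 : S⁻¹ * S = 1 := Matrix.nonsing_inv_mul S hSdet
  have hSS2 : S * S⁻¹ = 1 := Matrix.mul_nonsing_inv S hSdet
  -- Step F : K
  set K : Matrix (Fin n) (Fin n) ℝ := Ψ * S * Ψᵀ + K₀ with hKdef
  have hSS : (Ψ * S * Ψᵀ).PosSemidef := by
    have t := hS.posSemidef.mul_mul_conjTranspose_same Ψ
    rwa [htr Ψ] at t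
  have hKpd : K.PosDef := by
    refine posDef_of_psd_sub ha ?_
    have t := hSS.add hKa
    have e : Ψ * S * Ψᵀ + (K₀ - a • (1 : Matrix (Fin n) (Fin n) ℝ))
        = K - a • (1 : Matrix (Fin n) (Fin n) ℝ) := by rw [hKdef]; module
    rwa [e] at t
  have hKdet : IsUnit K.det := hKpd.det_pos.ne'.isUnit
  have hKK1 : K⁻¹ * K = 1 := Matrix.nonsing_inv_mul K hKdet
  have hKK2 : K * K⁻¹ = 1 := Matrix.mul_nonsing_inv K hKdet
  -- push-through identities
  have id1 : Ψᵀ * K₀⁻¹ * K = G * (S * Ψᵀ) := by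
    rw [hKdef, hGdef, hLdef, Matrix.mul_add, Matrix.add_mul]
    have c1 : Ψᵀ * K₀⁻¹ * (Ψ * S * Ψᵀ) = Ψᵀ * K₀⁻¹ * Ψ * (S * Ψᵀ) := by
      simp only [Matrix.mul_assoc]
    have c2 : Ψᵀ * K₀⁻¹ * K₀ = S⁻¹ * (S * Ψᵀ) := by
      rw [Matrix.mul_assoc, hKK, Matrix.mul_one, ← Matrix.mul_assoc, hSS1, Matrix.one_mul]
    rw [c1, c2, add_comm]
  have e1 : S * Ψᵀ * K⁻¹ = G⁻¹ * Ψᵀ * K₀⁻¹ := by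
    have t : G⁻¹ * (Ψᵀ * K₀⁻¹ * K) * K⁻¹ = G⁻¹ * (G * (S * Ψᵀ)) * K⁻¹ := by rw [id1]
    simp only [← Matrix.mul_assoc] at t
    rw [Matrix.mul_assoc _ K K⁻¹, hKK2, Matrix.mul_one, hGG1, Matrix.one_mul] at t
    exact t.symm
  have id2 : K * (K₀⁻¹ * Ψ) = Ψ * S * G := by
    rw [hKdef, hGdef, hLdef, Matrix.add_mul, Matrix.mul_add]
    have c1 : Ψ * S * Ψᵀ * (K₀⁻¹ * Ψ) = Ψ * S * (Ψᵀ * K₀⁻¹ * Ψ) := by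
      simp only [Matrix.mul_assoc]
    have c2 : K₀ * (K₀⁻¹ * Ψ) = Ψ * S * S⁻¹ := by
      rw [← Matrix.mul_assoc, hKK', Matrix.one_mul, Matrix.mul_assoc, hSS2, Matrix.mul_one]
    rw [c1, c2, add_comm]
  have e2 : K⁻¹ * Ψ * S = K₀⁻¹ * Ψ * G⁻¹ := by
    have t : K⁻¹ * (K * (K₀⁻¹ * Ψ)) * G⁻¹ = K⁻¹ * (Ψ * S * G) * G⁻¹ := by rw [id2]
    simp only [← Matrix.mul_assoc] at t
    rw [Matrix.mul_assoc _ G G⁻¹, hGG2, Matrix.mul_one, hKK1, Matrix.one_mul] at t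
    exact t.symm
  -- rewrite target matrix
  have key : S * Ψᵀ * (K⁻¹ * K⁻¹) * Ψ * S = G⁻¹ * X * G⁻¹ := by
    calc S * Ψᵀ * (K⁻¹ * K⁻¹) * Ψ * S = (S * Ψᵀ * K⁻¹) * (K⁻¹ * Ψ * S) := by
          simp only [Matrix.mul_assoc]
      _ = (G⁻¹ * Ψᵀ * K₀⁻¹) * (K₀⁻¹ * Ψ * G⁻¹) := by rw [e1, e2]
      _ = G⁻¹ * X * G⁻¹ := by
          rw [hXdef, hWdef]; simp only [Matrix.mul_assoc]
  rw [key]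
  -- trace estimates
  have hHpsd : G⁻¹.PosSemidef := hGpd.inv.posSemidef
  have hHih : G⁻¹.IsHermitian := hGpd.inv.1
  have hHHpsd : (G⁻¹ * G⁻¹).PosSemidef := by
    have t := Matrix.posSemidef_conjTranspose_mul_self G⁻¹
    rwa [hHih] at t
  have Ttr : (G⁻¹ * X * G⁻¹).trace = (X * (G⁻¹ * G⁻¹)).trace := by
    rw [Matrix.trace_mul_cycle, Matrix.trace_mul_comm]
  set t2 : ℝ := (G⁻¹ * G⁻¹).trace with ht2
  set t1 : ℝ := G⁻¹.trace with ht1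
  have l1 : α * t2 ≤ (X * (G⁻¹ * G⁻¹)).trace := by
    have t := psd_trace_mul_nonneg hXlo hHHpsd
    rw [Matrix.sub_mul, Matrix.smul_mul, Matrix.one_mul, Matrix.trace_sub,
      Matrix.trace_smul, smul_eq_mul] at t
    linarith
  have u1 : (X * (G⁻¹ * G⁻¹)).trace ≤ β * t2 := by
    have t := psd_trace_mul_nonneg hXup hHHpsd
    rw [Matrix.sub_mul, Matrix.smul_mul, Matrix.one_mul, Matrix.trace_sub,
      Matrix.trace_smul, smul_eq_mul] at t
    linarith
  have l2 : ν⁻¹ * t1 ≤ t2 := by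
    have t := psd_trace_mul_nonneg hHlo hHpsd
    rw [Matrix.sub_mul, Matrix.smul_mul, Matrix.one_mul, Matrix.trace_sub,
      Matrix.trace_smul, smul_eq_mul] at t
    linarith
  have u2 : t2 ≤ μ⁻¹ * t1 := by
    have t := psd_trace_mul_nonneg hHup hHpsd
    rw [Matrix.sub_mul, Matrix.smul_mul, Matrix.one_mul, Matrix.trace_sub,
      Matrix.trace_smul, smul_eq_mul] at t
    linarith
  have trone : (1 : Matrix (Fin B) (Fin B) ℝ).trace = (B:ℝ) := by
    rw [Matrix.trace_one, Fintype.card_fin]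
  have l3 : ν⁻¹ * (B:ℝ) ≤ t1 := by
    have t := psd_trace_nonneg hHlo
    rw [Matrix.trace_sub, Matrix.trace_smul, trone, smul_eq_mul] at t
    linarith
  have u3 : t1 ≤ μ⁻¹ * (B:ℝ) := by
    have t := psd_trace_nonneg hHup
    rw [Matrix.trace_sub, Matrix.trace_smul, trone, smul_eq_mul] at t
    linarith
  have hαpos : 0 < α := by rw [hαdef]; positivity
  have hβpos : 0 < β := by rw [hβdef]; positivity
  have hνinv : 0 < ν⁻¹ := by positivity
  have hμinv : 0 < μ⁻¹ := by positivity
  rw [Ttr]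
  constructor
  · have chain : α * (ν⁻¹ * (ν⁻¹ * (B:ℝ))) ≤ (X * (G⁻¹ * G⁻¹)).trace := by
      have s1 : ν⁻¹ * (ν⁻¹ * (B:ℝ)) ≤ ν⁻¹ * t1 := by
        exact mul_le_mul_of_nonneg_left l3 hνinv.le
      have s2 : ν⁻¹ * (ν⁻¹ * (B:ℝ)) ≤ t2 := le_trans s1 l2
      calc α * (ν⁻¹ * (ν⁻¹ * (B:ℝ))) ≤ α * t2 := mul_le_mul_of_nonneg_left s2 hαpos.le
        _ ≤ _ := l1
    refine le_trans (le_of_eq ?_) chain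
    rw [hαdef, hνdef]
    have h1 : (c₀ + 3/(2*a)) ≠ 0 := by positivity
    generalize (c₀ + 3/(2*a)) = s at h1 ⊢
    field_simp
  · have chain : (X * (G⁻¹ * G⁻¹)).trace ≤ β * (μ⁻¹ * (μ⁻¹ * (B:ℝ))) := by
      have s1 : μ⁻¹ * t1 ≤ μ⁻¹ * (μ⁻¹ * (B:ℝ)) := mul_le_mul_of_nonneg_left u3 hμinv.le
      have s2 : t2 ≤ μ⁻¹ * (μ⁻¹ * (B:ℝ)) := le_trans u2 s1
      calc (X * (G⁻¹ * G⁻¹)).trace ≤ β * t2 := u1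
        _ ≤ β * (μ⁻¹ * (μ⁻¹ * (B:ℝ))) := mul_le_mul_of_nonneg_left s2 hβpos.le
    refine le_trans chain (le_of_eq ?_)
    rw [hβdef, hμdef]
    field_simp
    ring
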